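/- Let Z be a compact metric space with at least four points and let M denote the set of antipodal diameter-one metrics on Z Moebius equivalent to a fixed such metric ρ₀, where each pair ρ₁, ρ₂ ∈ M admits a continuous positive derivative dρ₂/dρ₁ satisfying the Geometric Mean Value Theorem, the chain rule dρ₃/dρ₁ = (dρ₃/dρ₂)(dρ₂/dρ₁), and dρ₂/dρ₁ = 1/(dρ₁/dρ₂). Then d_M(ρ₁,ρ₂) := max_{ξ∈Z} log (dρ₂/dρ₁)(ξ) defines a metric on M. -/
import Mathlib


open Set Filter Topology

/-- An antipodal metric of diameter one on a topological space `Z`. -/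
structure IsAntipodalMetric {Z : Type*} [TopologicalSpace Z] (ρ : Z → Z → ℝ) : Prop where
  symm : ∀ ξ η, ρ ξ η = ρ η ξ
  eq_zero_iff : ∀ ξ η, ρ ξ η = 0 ↔ ξ = η
  nonneg : ∀ ξ η, 0 ≤ ρ ξ η
  triangle : ∀ ξ η ζ, ρ ξ ζ ≤ ρ ξ η + ρ η ζ
  continuous : Continuous fun p : Z × Z => ρ p.1 p.2
  le_one : ∀ ξ η, ρ ξ η ≤ 1
  antipodal : ∀ ξ, ∃ η, ρ ξ η = 1

/-- Moebius equivalence: equality of all metric cross-ratios (stated multiplicatively). -/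
def MoebiusEquiv {Z : Type*} (ρ σ : Z → Z → ℝ) : Prop :=
  ∀ ξ ξ' η η' : Z, ξ ≠ ξ' → ξ ≠ η → ξ ≠ η' → ξ' ≠ η → ξ' ≠ η' → η ≠ η' →
    ρ ξ η * ρ ξ' η' * (σ ξ η' * σ ξ' η) = σ ξ η * σ ξ' η' * (ρ ξ η' * ρ ξ' η)

/-- `dM D ρ₁ ρ₂ = max_ξ log (dρ₂/dρ₁)(ξ)`, where `D ρ₂ ρ₁` denotes the derivative
`dρ₂/dρ₁`. -/
noncomputable def dM {Z : Type*} (D : (Z → Z → ℝ) → (Z → Z → ℝ) → Z → ℝ)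
    (ρ₁ ρ₂ : Z → Z → ℝ) : ℝ :=
  ⨆ ξ : Z, Real.log (D ρ₂ ρ₁ ξ)

/-- `d_M(ρ₁,ρ₂) = max_ξ log (dρ₂/dρ₁)(ξ)` defines a metric on the space `M`
of antipodal diameter-one metrics Moebius equivalent to a fixed one `ρ₀`. -/
theorem dM_is_metric {Z : Type*} [MetricSpace Z] [CompactSpace Z] [Nonempty Z]
    (hfour : ∃ a b c d : Z, a ≠ b ∧ a ≠ c ∧ a ≠ d ∧ b ≠ c ∧ b ≠ d ∧ c ≠ d)
    (ρ₀ : Z → Z → ℝ) (h₀ : IsAntipodalMetric ρ₀)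
    (M : Set (Z → Z → ℝ))
    (hM : M = {ρ | IsAntipodalMetric ρ ∧ MoebiusEquiv ρ ρ₀})
    -- the derivative `D ρ₂ ρ₁ = dρ₂/dρ₁` of Moebius metrics, with its properties:
    (D : (Z → Z → ℝ) → (Z → Z → ℝ) → Z → ℝ)
    (hDpos : ∀ ρ₁ ∈ M, ∀ ρ₂ ∈ M, ∀ ξ, 0 < D ρ₂ ρ₁ ξ)
    (hDcont : ∀ ρ₁ ∈ M, ∀ ρ₂ ∈ M, Continuous (D ρ₂ ρ₁))
    (hGMVT : ∀ ρ₁ ∈ M, ∀ ρ₂ ∈ M, ∀ ξ η,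
      ρ₂ ξ η ^ 2 = D ρ₂ ρ₁ ξ * D ρ₂ ρ₁ η * ρ₁ ξ η ^ 2)
    (hchain : ∀ ρ₁ ∈ M, ∀ ρ₂ ∈ M, ∀ ρ₃ ∈ M, ∀ ξ,
      D ρ₃ ρ₁ ξ = D ρ₃ ρ₂ ξ * D ρ₂ ρ₁ ξ)
    (hinv : ∀ ρ₁ ∈ M, ∀ ρ₂ ∈ M, ∀ ξ, D ρ₂ ρ₁ ξ = (D ρ₁ ρ₂ ξ)⁻¹) :
    (∀ ρ₁ ∈ M, ∀ ρ₂ ∈ M, 0 ≤ dM D ρ₁ ρ₂) ∧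
    (∀ ρ₁ ∈ M, ∀ ρ₂ ∈ M, (dM D ρ₁ ρ₂ = 0 ↔ ρ₁ = ρ₂)) ∧
    (∀ ρ₁ ∈ M, ∀ ρ₂ ∈ M, dM D ρ₁ ρ₂ = dM D ρ₂ ρ₁) ∧
    (∀ ρ₁ ∈ M, ∀ ρ₂ ∈ M, ∀ ρ₃ ∈ M, dM D ρ₁ ρ₃ ≤ dM D ρ₁ ρ₂ + dM D ρ₂ ρ₃) := by
  subst hM
  -- basic facts
  have hanti : ∀ ρ ∈ ({ρ | IsAntipodalMetric ρ ∧ MoebiusEquiv ρ ρ₀} : Set (Z → Z → ℝ)),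
      IsAntipodalMetric ρ := fun ρ hρ => hρ.1
  set M : Set (Z → Z → ℝ) := {ρ | IsAntipodalMetric ρ ∧ MoebiusEquiv ρ ρ₀} with hMdef
  -- D ρ ρ = 1
  have hone : ∀ ρ ∈ M, ∀ ξ, D ρ ρ ξ = 1 := by
    intro ρ hρ ξ
    have h := hchain ρ hρ ρ hρ ρ hρ ξ
    have hp := hDpos ρ hρ ρ hρ ξ
    nlinarith [h, hp]
  -- continuity of log ∘ D
  have hcl : ∀ ρ₁ ∈ M, ∀ ρ₂ ∈ M, Continuous (fun ξ => Real.log (D ρ₂ ρ₁ ξ)) := by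
    intro ρ₁ h₁ ρ₂ h₂
    exact (hDcont ρ₁ h₁ ρ₂ h₂).log (fun ξ => (hDpos ρ₁ h₁ ρ₂ h₂ ξ).ne')
  -- maximum of log D is attained and equals dM
  have hmax : ∀ ρ₁ ∈ M, ∀ ρ₂ ∈ M, ∃ ξ : Z,
      (∀ y, Real.log (D ρ₂ ρ₁ y) ≤ Real.log (D ρ₂ ρ₁ ξ)) ∧
      dM D ρ₁ ρ₂ = Real.log (D ρ₂ ρ₁ ξ) := by
    intro ρ₁ h₁ ρ₂ h₂
    obtain ⟨ξ, -, hξ'⟩ := isCompact_univ.exists_isMaxOn univ_nonempty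
      (hcl ρ₁ h₁ ρ₂ h₂).continuousOn
    have hξ : ∀ y, Real.log (D ρ₂ ρ₁ y) ≤ Real.log (D ρ₂ ρ₁ ξ) := fun y => hξ' (mem_univ y)
    refine ⟨ξ, hξ, le_antisymm (ciSup_le hξ) ?_⟩
    exact le_ciSup ⟨_, by rintro _ ⟨y, rfl⟩; exact hξ y⟩ ξ
  -- minimum of log D is attained
  have hmin : ∀ ρ₁ ∈ M, ∀ ρ₂ ∈ M, ∃ ξ : Z,
      ∀ y, Real.log (D ρ₂ ρ₁ ξ) ≤ Real.log (D ρ₂ ρ₁ y) := by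
    intro ρ₁ h₁ ρ₂ h₂
    obtain ⟨ξ, -, hξ'⟩ := isCompact_univ.exists_isMinOn univ_nonempty
      (hcl ρ₁ h₁ ρ₂ h₂).continuousOn
    exact ⟨ξ, fun y => hξ' (mem_univ y)⟩
  -- for every ξ there is η with D ξ * D η ≥ 1
  have key1 : ∀ ρ₁ ∈ M, ∀ ρ₂ ∈ M, ∀ ξ, ∃ η, 1 ≤ D ρ₂ ρ₁ ξ * D ρ₂ ρ₁ η := by
    intro ρ₁ h₁ ρ₂ h₂ ξ
    obtain ⟨η, hη⟩ := (hanti ρ₂ h₂).antipodal ξ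
    refine ⟨η, ?_⟩
    have hg := hGMVT ρ₁ h₁ ρ₂ h₂ ξ η
    have hx := hDpos ρ₁ h₁ ρ₂ h₂ ξ
    have hy := hDpos ρ₁ h₁ ρ₂ h₂ η
    have h1 := (hanti ρ₁ h₁).le_one ξ η
    have h2 := (hanti ρ₁ h₁).nonneg ξ η
    rw [hη] at hg
    nlinarith [mul_nonneg (mul_pos hx hy).le
      (sub_nonneg.mpr (show ρ₁ ξ η ^ 2 ≤ 1 by nlinarith))]
  -- for every ξ there is η with D ξ * D η ≤ 1
  have key2 : ∀ ρ₁ ∈ M, ∀ ρ₂ ∈ M, ∀ ξ, ∃ η, D ρ₂ ρ₁ ξ * D ρ₂ ρ₁ η ≤ 1 := by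
    intro ρ₁ h₁ ρ₂ h₂ ξ
    obtain ⟨η, hη⟩ := (hanti ρ₁ h₁).antipodal ξ
    refine ⟨η, ?_⟩
    have hg := hGMVT ρ₁ h₁ ρ₂ h₂ ξ η
    have h1 := (hanti ρ₂ h₂).le_one ξ η
    have h2 := (hanti ρ₂ h₂).nonneg ξ η
    rw [hη] at hg
    nlinarith
  -- log versions
  have klog1 : ∀ ρ₁ ∈ M, ∀ ρ₂ ∈ M, ∀ ξ, ∃ η,
      0 ≤ Real.log (D ρ₂ ρ₁ ξ) + Real.log (D ρ₂ ρ₁ η) := by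
    intro ρ₁ h₁ ρ₂ h₂ ξ
    obtain ⟨η, hη⟩ := key1 ρ₁ h₁ ρ₂ h₂ ξ
    refine ⟨η, ?_⟩
    rw [← Real.log_mul (hDpos ρ₁ h₁ ρ₂ h₂ ξ).ne' (hDpos ρ₁ h₁ ρ₂ h₂ η).ne']
    exact Real.log_nonneg hη
  have klog2 : ∀ ρ₁ ∈ M, ∀ ρ₂ ∈ M, ∀ ξ, ∃ η,
      Real.log (D ρ₂ ρ₁ ξ) + Real.log (D ρ₂ ρ₁ η) ≤ 0 := by
    intro ρ₁ h₁ ρ₂ h₂ ξ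
    obtain ⟨η, hη⟩ := key2 ρ₁ h₁ ρ₂ h₂ ξ
    refine ⟨η, ?_⟩
    rw [← Real.log_mul (hDpos ρ₁ h₁ ρ₂ h₂ ξ).ne' (hDpos ρ₁ h₁ ρ₂ h₂ η).ne']
    exact Real.log_nonpos (le_of_lt (mul_pos (hDpos ρ₁ h₁ ρ₂ h₂ ξ) (hDpos ρ₁ h₁ ρ₂ h₂ η))) hη
  -- max + min = 0
  have hsum : ∀ ρ₁ ∈ M, ∀ ρ₂ ∈ M, ∀ ξM ξm : Z,
      (∀ y, Real.log (D ρ₂ ρ₁ y) ≤ Real.log (D ρ₂ ρ₁ ξM)) →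
      (∀ y, Real.log (D ρ₂ ρ₁ ξm) ≤ Real.log (D ρ₂ ρ₁ y)) →
      Real.log (D ρ₂ ρ₁ ξM) + Real.log (D ρ₂ ρ₁ ξm) = 0 := by
    intro ρ₁ h₁ ρ₂ h₂ ξM ξm hM hm
    obtain ⟨η₁, hη₁⟩ := klog2 ρ₁ h₁ ρ₂ h₂ ξM
    obtain ⟨η₂, hη₂⟩ := klog1 ρ₁ h₁ ρ₂ h₂ ξm
    have := hm η₁
    have := hM η₂
    linarith
  -- symmetry
  have hsymm : ∀ ρ₁ ∈ M, ∀ ρ₂ ∈ M, dM D ρ₁ ρ₂ = dM D ρ₂ ρ₁ := by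
    intro ρ₁ h₁ ρ₂ h₂
    obtain ⟨ξM, hξM, hvalM⟩ := hmax ρ₁ h₁ ρ₂ h₂
    obtain ⟨ξm, hξm⟩ := hmin ρ₁ h₁ ρ₂ h₂
    obtain ⟨ζ, hζ, hvalζ⟩ := hmax ρ₂ h₂ ρ₁ h₁
    have hflip : ∀ ξ, Real.log (D ρ₁ ρ₂ ξ) = - Real.log (D ρ₂ ρ₁ ξ) := by
      intro ξ
      rw [hinv ρ₂ h₂ ρ₁ h₁ ξ, Real.log_inv]
    have h1 : Real.log (D ρ₁ ρ₂ ζ) = - Real.log (D ρ₂ ρ₁ ξm) := by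
      have ha : Real.log (D ρ₁ ρ₂ ζ) ≤ - Real.log (D ρ₂ ρ₁ ξm) := by
        rw [hflip ζ]; exact neg_le_neg (hξm ζ)
      have hb : - Real.log (D ρ₂ ρ₁ ξm) ≤ Real.log (D ρ₁ ρ₂ ζ) := by
        have := hζ ξm
        rw [hflip ξm] at this
        linarith
      linarith
    have hs := hsum ρ₁ h₁ ρ₂ h₂ ξM ξm hξM hξm
    rw [hvalM, hvalζ, h1]
    linarith
  -- nonnegativity
  have hnn : ∀ ρ₁ ∈ M, ∀ ρ₂ ∈ M, 0 ≤ dM D ρ₁ ρ₂ := by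
    intro ρ₁ h₁ ρ₂ h₂
    obtain ⟨ξM, hξM, hvalM⟩ := hmax ρ₁ h₁ ρ₂ h₂
    obtain ⟨ξm, hξm⟩ := hmin ρ₁ h₁ ρ₂ h₂
    have hs := hsum ρ₁ h₁ ρ₂ h₂ ξM ξm hξM hξm
    have := hξm ξM
    rw [hvalM]
    linarith
  refine ⟨hnn, ?_, hsymm, ?_⟩
  · -- zero iff equal
    intro ρ₁ h₁ ρ₂ h₂
    constructor
    · intro h0
      obtain ⟨ξM, hξM, hvalM⟩ := hmax ρ₁ h₁ ρ₂ h₂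
      obtain ⟨ξm, hξm⟩ := hmin ρ₁ h₁ ρ₂ h₂
      have hs := hsum ρ₁ h₁ ρ₂ h₂ ξM ξm hξM hξm
      have hMz : Real.log (D ρ₂ ρ₁ ξM) = 0 := by rw [hvalM] at h0; exact h0
      have hmz : Real.log (D ρ₂ ρ₁ ξm) = 0 := by linarith
      have hDone : ∀ ξ, D ρ₂ ρ₁ ξ = 1 := by
        intro ξ
        have hle := hξM ξ
        have hge := hξm ξ
        have hlz : Real.log (D ρ₂ ρ₁ ξ) = 0 := by linarith
        have := Real.exp_log (hDpos ρ₁ h₁ ρ₂ h₂ ξ)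
        rw [hlz, Real.exp_zero] at this
        linarith
      funext ξ η
      have hg := hGMVT ρ₁ h₁ ρ₂ h₂ ξ η
      rw [hDone ξ, hDone η] at hg
      have h1 := (hanti ρ₁ h₁).nonneg ξ η
      have h2 := (hanti ρ₂ h₂).nonneg ξ η
      nlinarith
    · rintro rfl
      have : dM D ρ₁ ρ₁ = ⨆ _ : Z, (0 : ℝ) := by
        unfold dM
        congr 1
        funext ξ
        rw [hone ρ₁ h₁ ξ, Real.log_one]
      rw [this, ciSup_const]
  · -- triangle inequality
    intro ρ₁ h₁ ρ₂ h₂ ρ₃ h₃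
    obtain ⟨ξ, hξ, hval⟩ := hmax ρ₁ h₁ ρ₃ h₃
    obtain ⟨a, ha, hvala⟩ := hmax ρ₁ h₁ ρ₂ h₂
    obtain ⟨b, hb, hvalb⟩ := hmax ρ₂ h₂ ρ₃ h₃
    rw [hval, hvala, hvalb]
    have hc := hchain ρ₁ h₁ ρ₂ h₂ ρ₃ h₃ ξ
    rw [hc, Real.log_mul (hDpos ρ₂ h₂ ρ₃ h₃ ξ).ne' (hDpos ρ₁ h₁ ρ₂ h₂ ξ).ne']
    have := ha ξ
    have := hb ξ
    linarith
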